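/- The cubic forms f₁ and f₂ satisfy f₁∘g₁ = f₁, f₁∘g₂ = f₁, f₂∘g₁ = f₂ and f₂∘g₂ = f₂, and every homogeneous polynomial of degree 3 in ℂ[x₁,…,x₅] that is invariant under the substitutions g₁ and g₂ is a ℂ-linear combination of f₁ and f₂; that is, the space of Γ-invariant cubic forms on ℂ⁵ is exactly the 2-dimensional space spanned by f₁ and f₂. -/
import Mathlib


open Projectivization MvPolynomial

noncomputable section
set_option linter.unnecessarySeqFocus false
set_option maxHeartbeats 1000000

/-- ℂ⁵ -/
abbrev V5 : Type := Fin 5 → ℂ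

/-- ℙ⁴ = ℙ(ℂ⁵) -/
abbrev P4 : Type := Projectivization ℂ V5

/-- g₁(x₁,…,x₅) = (x₄, x₁, x₅, x₂, −x₁−x₂−x₃−x₄−x₅). -/
def g1 : V5 ≃ₗ[ℂ] V5 where
  toFun x := ![x 3, x 0, x 4, x 1, -(x 0 + x 1 + x 2 + x 3 + x 4)]
  map_add' a b := by funext i; fin_cases i <;> simp <;> ring
  map_smul' c a := by funext i; fin_cases i <;> simp <;> ring
  invFun y := ![y 1, y 3, -(y 0 + y 1 + y 2 + y 3 + y 4), y 0, y 2]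
  left_inv x := by funext i; fin_cases i <;> simp <;> ring
  right_inv y := by funext i; fin_cases i <;> simp <;> ring

/-- g₂(x₁,…,x₅) = (x₄, −x₁−x₂−x₃−x₄−x₅, x₁, x₃, x₂). -/
def g2 : V5 ≃ₗ[ℂ] V5 where
  toFun x := ![x 3, -(x 0 + x 1 + x 2 + x 3 + x 4), x 0, x 2, x 1]
  map_add' a b := by funext i; fin_cases i <;> simp <;> ring
  map_smul' c a := by funext i; fin_cases i <;> simp <;> ring
  invFun y := ![y 2, y 4, y 3, y 0, -(y 0 + y 1 + y 2 + y 3 + y 4)]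
  left_inv x := by funext i; fin_cases i <;> simp <;> ring
  right_inv y := by funext i; fin_cases i <;> simp <;> ring

/-- Γ ⊂ GL(ℂ⁵) is the subgroup generated by g₁ and g₂. -/
def Gamma : Subgroup (V5 ≃ₗ[ℂ] V5) := Subgroup.closure {g1, g2}

/-- The induced map on ℙ⁴ of a linear automorphism of ℂ⁵. -/
def projMap (γ : V5 ≃ₗ[ℂ] V5) : P4 → P4 :=
  Projectivization.map γ.toLinearMap γ.injective

/-- The Γ-orbit of a point of ℙ⁴. -/
def GammaOrbit (p : P4) : Set P4 :=
  { q | ∃ γ ∈ Gamma, q = projMap γ p }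

/-- The quadratic form q = Σ_{1≤i≤j≤5} xᵢxⱼ. -/
def qQ (v : V5) : ℂ := ∑ i, ∑ j, if i ≤ j then v i * v j else 0

/-- The quadric threefold X₂ = {q = 0} ⊂ ℙ⁴. -/
def X2 : Set P4 :=
  { p | ∃ (v : V5) (hv : v ≠ 0), p = Projectivization.mk ℂ v hv ∧ qQ v = 0 }

/-- The substitution p ↦ p∘g₁ on polynomials. -/
def sub1 : MvPolynomial (Fin 5) ℂ →ₐ[ℂ] MvPolynomial (Fin 5) ℂ :=
  bind₁ ![X 3, X 0, X 4, X 1, -(X 0 + X 1 + X 2 + X 3 + X 4)]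

/-- The substitution p ↦ p∘g₂ on polynomials. -/
def sub2 : MvPolynomial (Fin 5) ℂ →ₐ[ℂ] MvPolynomial (Fin 5) ℂ :=
  bind₁ ![X 3, -(X 0 + X 1 + X 2 + X 3 + X 4), X 0, X 2, X 1]

/-- The cubic form f₁ as a polynomial. -/
def f1P : MvPolynomial (Fin 5) ℂ :=
  X 0 ^ 2 * X 1 + X 0 * X 1 ^ 2 + 2 * (X 0 * X 1 * X 2) + X 1 ^ 2 * X 2 + X 1 * X 2 ^ 2 +
    2 * (X 1 * X 2 * X 3) + X 2 ^ 2 * X 3 + X 2 * X 3 ^ 2 + X 0 ^ 2 * X 4 +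
    2 * (X 0 * X 1 * X 4) + 2 * (X 0 * X 3 * X 4) + 2 * (X 2 * X 3 * X 4) + X 3 ^ 2 * X 4 +
    X 0 * X 4 ^ 2 + X 3 * X 4 ^ 2

/-- The cubic form f₂ as a polynomial. -/
def f2P : MvPolynomial (Fin 5) ℂ :=
  X 0 ^ 2 * X 2 + X 0 * X 2 ^ 2 + X 0 ^ 2 * X 3 + 2 * (X 0 * X 1 * X 3) + X 1 ^ 2 * X 3 +
    2 * (X 0 * X 2 * X 3) + X 0 * X 3 ^ 2 + X 1 * X 3 ^ 2 + X 1 ^ 2 * X 4 +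
    2 * (X 0 * X 2 * X 4) + 2 * (X 1 * X 2 * X 4) + X 2 ^ 2 * X 4 + 2 * (X 1 * X 3 * X 4) +
    X 1 * X 4 ^ 2 + X 2 * X 4 ^ 2


/-! ### Auxiliary machinery -/

def e5 (a b c d e : ℕ) : Fin 5 →₀ ℕ := Finsupp.equivFunOnFinite.symm ![a,b,c,d,e]

def emb5 : (Fin 5 → ℕ) ↪ (Fin 5 →₀ ℕ) := Finsupp.equivFunOnFinite.symm.toEmbedding

lemma e5_apply (a b c d e : ℕ) (i : Fin 5) : (e5 a b c d e) i = ![a,b,c,d,e] i := rfl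

lemma monomial_e5 (a b c d e : ℕ) (r : ℂ) :
    monomial (e5 a b c d e) r = C r * X 0^a * X 1^b * X 2^c * X 3^d * X 4^e := by
  have h : e5 a b c d e = Finsupp.single 0 a + Finsupp.single 1 b + Finsupp.single 2 c +
      Finsupp.single 3 d + Finsupp.single 4 e := by
    ext i; fin_cases i <;> simp [e5_apply, Finsupp.single_apply]
  rw [h]
  simp [X_pow_eq_monomial, monomial_mul, C_mul_monomial]

lemma degree_eq_sum (d : Fin 5 →₀ ℕ) : d.degree = ∑ i, d i :=
  Finset.sum_subset (Finset.subset_univ _) (by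
    intro x _ hx
    simpa [Finsupp.mem_support_iff] using hx)

lemma eval_sub1 (v : Fin 5 → ℂ) (p : MvPolynomial (Fin 5) ℂ) :
    eval v (sub1 p) = eval ![v 3, v 0, v 4, v 1, -(v 0 + v 1 + v 2 + v 3 + v 4)] p := by
  show eval₂Hom (RingHom.id ℂ) v (bind₁ _ p) = eval₂Hom (RingHom.id ℂ) _ p
  rw [eval₂Hom_bind₁]
  have h : (fun i => eval₂Hom (RingHom.id ℂ) v
      (![X 3, X 0, X 4, X 1, -(X 0 + X 1 + X 2 + X 3 + X 4)] i)) =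
      ![v 3, v 0, v 4, v 1, -(v 0 + v 1 + v 2 + v 3 + v 4)] := by
    funext i; fin_cases i <;> simp
  rw [h]

lemma eval_sub2 (v : Fin 5 → ℂ) (p : MvPolynomial (Fin 5) ℂ) :
    eval v (sub2 p) = eval ![v 3, -(v 0 + v 1 + v 2 + v 3 + v 4), v 0, v 2, v 1] p := by
  show eval₂Hom (RingHom.id ℂ) v (bind₁ _ p) = eval₂Hom (RingHom.id ℂ) _ p
  rw [eval₂Hom_bind₁]
  have h : (fun i => eval₂Hom (RingHom.id ℂ) v
      (![X 3, -(X 0 + X 1 + X 2 + X 3 + X 4), X 0, X 2, X 1] i)) =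
      ![v 3, -(v 0 + v 1 + v 2 + v 3 + v 4), v 0, v 2, v 1] := by
    funext i; fin_cases i <;> simp
  rw [h]

lemma eval_monomial_e5 (v : Fin 5 → ℂ) (a b c d e : ℕ) (r : ℂ) :
    eval v (monomial (e5 a b c d e) r) = r * v 0^a * v 1^b * v 2^c * v 3^d * v 4^e := by
  rw [monomial_e5]
  simp only [map_mul, map_pow, eval_C, eval_X]


set_option maxHeartbeats 1000000 in
lemma rep0 (p : MvPolynomial (Fin 5) ℂ) (hp : p.IsHomogeneous 3) :
    p = monomial (e5 3 0 0 0 0) (coeff (e5 3 0 0 0 0) p) + (monomial (e5 2 1 0 0 0) (coeff (e5 2 1 0 0 0) p) + (monomial (e5 2 0 1 0 0) (coeff (e5 2 0 1 0 0) p) + (monomial (e5 2 0 0 1 0) (coeff (e5 2 0 0 1 0) p) + (monomial (e5 2 0 0 0 1) (coeff (e5 2 0 0 0 1) p) + (monomial (e5 1 2 0 0 0) (coeff (e5 1 2 0 0 0) p) + (monomial (e5 1 1 1 0 0) (coeff (e5 1 1 1 0 0) p) + (monomial (e5 1 1 0 1 0) (coeff (e5 1 1 0 1 0) p) + (monomial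 (e5 1 1 0 0 1) (coeff (e5 1 1 0 0 1) p) + (monomial (e5 1 0 2 0 0) (coeff (e5 1 0 2 0 0) p) + (monomial (e5 1 0 1 1 0) (coeff (e5 1 0 1 1 0) p) + (monomial (e5 1 0 1 0 1) (coeff (e5 1 0 1 0 1) p) + (monomial (e5 1 0 0 2 0) (coeff (e5 1 0 0 2 0) p) + (monomial (e5 1 0 0 1 1) (coeff (e5 1 0 0 1 1) p) + (monomial (e5 1 0 0 0 2) (coeff (e5 1 0 0 0 2) p) + (monomial (e5 0 3 0 0 0) (coeff (e5 0 3 0 0 0) p) + (monomial (e5 0 2 1 0 0) (coeff (e5 0 2 1 0 0) p) + (monomial (e5 0 2 0 1 0) (coeff (e5 0 2 0 1 0) p) + (monomial (e5 0 2 0 0 1) (coeff (e5 0 2 0 0 1) p) + (monomial (e5 0 1 2 0 0) (coeff (e5 0 1 2 0 0) p) + (monomial (e5 0 1 1 1 0) (coeff (e5 0 1 1 1 0) p) + (monomial (e5 0 1 1 0 1) (coeff (e5 0 1 1 0 1) p) + (monomial (e5 0 1 0 2 0) (coeff (e5 0 1 0 2 0) p) + (monomial (e5 0 1 0 1 1)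 (coeff (e5 0 1 0 1 1) p) + (monomial (e5 0 1 0 0 2) (coeff (e5 0 1 0 0 2) p) + (monomial (e5 0 0 3 0 0) (coeff (e5 0 0 3 0 0) p) + (monomial (e5 0 0 2 1 0) (coeff (e5 0 0 2 1 0) p) + (monomial (e5 0 0 2 0 1) (coeff (e5 0 0 2 0 1) p) + (monomial (e5 0 0 1 2 0) (coeff (e5 0 0 1 2 0) p) + (monomial (e5 0 0 1 1 1) (coeff (e5 0 0 1 1 1) p) + (monomial (e5 0 0 1 0 2) (coeff (e5 0 0 1 0 2) p) + (monomial (e5 0 0 0 3 0) (coeff (e5 0 0 0 3 0) p) + (monomial (e5 0 0 0 2 1) (coeff (e5 0 0 0 2 1) p) + (monomial (e5 0 0 0 1 2) (coeff (e5 0 0 0 1 2) p) + (monomial (e5 0 0 0 0 3) (coeff (e5 0 0 0 0 3) p))))))))))))))))))))))))))))))))))) := by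
  have hsub : p.support ⊆ (Finset.Nat.antidiagonalTuple 5 3).map emb5 := by
    intro d hd
    have hdeg : d.degree = 3 := by
      by_contra hne
      exact mem_support_iff.mp hd (hp.coeff_eq_zero hne)
    refine Finset.mem_map.mpr ⟨⇑Finsupp.equivFunOnFinite d, ?_, ?_⟩
    · rw [Finset.Nat.mem_antidiagonalTuple]
      show ∑ i, d i = 3
      rw [← degree_eq_sum]
      exact hdeg
    · exact Finsupp.equivFunOnFinite.symm_apply_apply d
  have h1 : p = ∑ d ∈ (Finset.Nat.antidiagonalTuple 5 3).map emb5, monomial d (coeff d p) := by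
    conv_lhs => rw [p.as_sum]
    refine Finset.sum_subset hsub ?_
    intro x _ hx
    rw [notMem_support_iff.mp hx, monomial_zero]
  conv_lhs => rw [h1]
  rw [Finset.sum_map]
  rw [show Finset.Nat.antidiagonalTuple 5 3 = ({![3,0,0,0,0], ![2,1,0,0,0], ![2,0,1,0,0], ![2,0,0,1,0], ![2,0,0,0,1], ![1,2,0,0,0], ![1,1,1,0,0], ![1,1,0,1,0], ![1,1,0,0,1], ![1,0,2,0,0], ![1,0,1,1,0], ![1,0,1,0,1], ![1,0,0,2,0], ![1,0,0,1,1], ![1,0,0,0,2], ![0,3,0,0,0], ![0,2,1,0,0], ![0,2,0,1,0], ![0,2,0,0,1], ![0,1,2,0,0], ![0,1,1,1,0], ![0,1,1,0,1], ![0,1,0,2,0], ![0,1,0,1,1], ![0,1,0,0,2], ![0,0,3,0,0], ![0,0,2,1,0], ![0,0,2,0,1], ![0,0,1,2,0], ![0,0,1,1,1], ![0,0,1,0,2], ![0,0,0,3,0], ![0,0,0,2,1], ![0,0,0,1,2], ![0,0,0,0,3]} : Finset (Fin 5 → ℕ)) from by decide]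
  rw [Finset.sum_insert (by decide), Finset.sum_insert (by decide), Finset.sum_insert (by decide), Finset.sum_insert (by decide), Finset.sum_insert (by decide), Finset.sum_insert (by decide), Finset.sum_insert (by decide), Finset.sum_insert (by decide), Finset.sum_insert (by decide), Finset.sum_insert (by decide), Finset.sum_insert (by decide), Finset.sum_insert (by decide), Finset.sum_insert (by decide), Finset.sum_insert (by decide), Finset.sum_insert (by decide), Finset.sum_insert (by decide), Finset.sum_insert (by decide), Finset.sum_insert (by decide), Finset.sum_insert (by decide), Finset.sum_insert (by decide), Finset.sum_insert (by decide), Finset.sum_insert (by decide), Finset.sum_insert (by decide), Finset.sum_insert (by decide), Finset.sum_insert (by decide), Finset.sum_insert (by decide), Finset.sum_insert (by decide), Finset.sum_insert (by decide), Finset.sum_insert (by decide), Finset.sum_insert (by decide), Finset.sum_insert (by decide), Finset.sum_insert (by decide), Finset.sum_insert (by decide), Finset.sum_insert (by decide)]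
  rw [Finset.sum_singleton]
  rfl

set_option maxHeartbeats 1000000 in
lemma span_form (a b : ℂ) : C a * f1P + C b * f2P = monomial (e5 3 0 0 0 0) ((0 : ℂ) * a + (0 : ℂ) * b) + (monomial (e5 2 1 0 0 0) (a) + (monomial (e5 2 0 1 0 0) (b) + (monomial (e5 2 0 0 1 0) ((0 : ℂ) * a + (1 : ℂ) * b) + (monomial (e5 2 0 0 0 1) ((1 : ℂ) * a + (0 : ℂ) * b) + (monomial (e5 1 2 0 0 0) ((1 : ℂ) * a + (0 : ℂ) * b) + (monomial (e5 1 1 1 0 0) ((2 : ℂ) * a + (0 : ℂ) * b) + (monomial (e5 1 1 0 1 0) ((0 : ℂ) * a + (2 : ℂ) * b) + (monomial (e5 1 1 0 0 1) ((2 : ℂ) * a + (0 : ℂ) * b) + (monomial (e5 1 0 2 0 0) ((0 : ℂ) * a + (1 : ℂ) * b) + (monomial (e5 1 0 1 1 0) ((0 : ℂ) * a + (2 : ℂ) * b) + (monomial (e5 1 0 1 0 1) ((0 : ℂ) * a + (2 : ℂ) * b) + (monomial (e5 1 0 0 2 0) ((0 : ℂ) * a + (1 : ℂ) * b) + (monomial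 (e5 1 0 0 1 1) ((2 : ℂ) * a + (0 : ℂ) * b) + (monomial (e5 1 0 0 0 2) ((1 : ℂ) * a + (0 : ℂ) * b) + (monomial (e5 0 3 0 0 0) ((0 : ℂ) * a + (0 : ℂ) * b) + (monomial (e5 0 2 1 0 0) ((1 : ℂ) * a + (0 : ℂ) * b) + (monomial (e5 0 2 0 1 0) ((0 : ℂ) * a + (1 : ℂ) * b) + (monomial (e5 0 2 0 0 1) ((0 : ℂ) * a + (1 : ℂ) * b) + (monomial (e5 0 1 2 0 0) ((1 : ℂ) * a + (0 : ℂ) * b) + (monomial (e5 0 1 1 1 0) ((2 : ℂ) * a + (0 : ℂ) * b) + (monomial (e5 0 1 1 0 1) ((0 : ℂ) * a + (2 : ℂ) * b) + (monomial (e5 0 1 0 2 0) ((0 : ℂ) * a + (1 : ℂ) * b) + (monomial (e5 0 1 0 1 1) ((0 : ℂ) * a + (2 : ℂ) * b) + (monomial (e5 0 1 0 0 2) ((0 : ℂ) * a + (1 : ℂ) * b) + (monomial (e5 0 0 3 0 0) ((0 : ℂ) * a + (0 : ℂ) * b) + (monomial (e5 0 0 2 1 0) ((1 : ℂ) * a +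 (0 : ℂ) * b) + (monomial (e5 0 0 2 0 1) ((0 : ℂ) * a + (1 : ℂ) * b) + (monomial (e5 0 0 1 2 0) ((1 : ℂ) * a + (0 : ℂ) * b) + (monomial (e5 0 0 1 1 1) ((2 : ℂ) * a + (0 : ℂ) * b) + (monomial (e5 0 0 1 0 2) ((0 : ℂ) * a + (1 : ℂ) * b) + (monomial (e5 0 0 0 3 0) ((0 : ℂ) * a + (0 : ℂ) * b) + (monomial (e5 0 0 0 2 1) ((1 : ℂ) * a + (0 : ℂ) * b) + (monomial (e5 0 0 0 1 2) ((1 : ℂ) * a + (0 : ℂ) * b) + (monomial (e5 0 0 0 0 3) ((0 : ℂ) * a + (0 : ℂ) * b))))))))))))))))))))))))))))))))))) := by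
  simp only [monomial_e5, f1P, f2P, map_add, map_mul, map_ofNat, map_one, map_zero]
  ring

/-- f₁ and f₂ are Γ-invariant, and the space of Γ-invariant cubic forms is exactly the
2-dimensional space spanned by f₁ and f₂. -/
theorem statement11 :
    sub1 f1P = f1P ∧ sub2 f1P = f1P ∧ sub1 f2P = f2P ∧ sub2 f2P = f2P ∧
    (∀ p : MvPolynomial (Fin 5) ℂ, p.IsHomogeneous 3 → sub1 p = p → sub2 p = p →
      ∃ a b : ℂ, p = C a * f1P + C b * f2P) ∧
    LinearIndependent ℂ ![f1P, f2P] := by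
  refine ⟨?_, ?_, ?_, ?_, ?_, ?_⟩
  · simp only [sub1, f1P, map_add, map_mul, map_pow, map_ofNat, map_neg, bind₁_X_right,
      Matrix.cons_val_zero, Matrix.cons_val_one, Matrix.head_cons, Matrix.cons_val_two,
      Matrix.tail_cons, Matrix.cons_val_three, Matrix.cons_val_four, Matrix.cons_val_fin_one]
    ring
  · simp only [sub2, f1P, map_add, map_mul, map_pow, map_ofNat, map_neg, bind₁_X_right,
      Matrix.cons_val_zero, Matrix.cons_val_one, Matrix.head_cons, Matrix.cons_val_two,
      Matrix.tail_cons, Matrix.cons_val_three, Matrix.cons_val_four, Matrix.cons_val_fin_one]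
    ring
  · simp only [sub1, f2P, map_add, map_mul, map_pow, map_ofNat, map_neg, bind₁_X_right,
      Matrix.cons_val_zero, Matrix.cons_val_one, Matrix.head_cons, Matrix.cons_val_two,
      Matrix.tail_cons, Matrix.cons_val_three, Matrix.cons_val_four, Matrix.cons_val_fin_one]
    ring
  · simp only [sub2, f2P, map_add, map_mul, map_pow, map_ofNat, map_neg, bind₁_X_right,
      Matrix.cons_val_zero, Matrix.cons_val_one, Matrix.head_cons, Matrix.cons_val_two,
      Matrix.tail_cons, Matrix.cons_val_three, Matrix.cons_val_four, Matrix.cons_val_fin_one]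
    ring
  · intro p hp h1 h2
    have hr := rep0 p hp
    have E0 := congrArg (eval (![(0 : ℂ),(0 : ℂ),(0 : ℂ),(0 : ℂ),(1 : ℂ)] : Fin 5 → ℂ)) h2
    rw [eval_sub2, hr] at E0
    have E1 := congrArg (eval (![(0 : ℂ),(0 : ℂ),(1 : ℂ),(0 : ℂ),(0 : ℂ)] : Fin 5 → ℂ)) h1
    rw [eval_sub1, hr] at E1
    have E2 := congrArg (eval (![(0 : ℂ),(0 : ℂ),(1 : ℂ),(0 : ℂ),(1 : ℂ)] : Fin 5 → ℂ)) h1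
    rw [eval_sub1, hr] at E2
    have E3 := congrArg (eval (![(0 : ℂ),(1 : ℂ),(0 : ℂ),(0 : ℂ),(1 : ℂ)] : Fin 5 → ℂ)) h2
    rw [eval_sub2, hr] at E3
    have E4 := congrArg (eval (![(0 : ℂ),(0 : ℂ),(0 : ℂ),(1 : ℂ),(0 : ℂ)] : Fin 5 → ℂ)) h1
    rw [eval_sub1, hr] at E4
    have E5 := congrArg (eval (![(0 : ℂ),(0 : ℂ),(0 : ℂ),(1 : ℂ),(0 : ℂ)] : Fin 5 → ℂ)) h2
    rw [eval_sub2, hr] at E5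
    have E6 := congrArg (eval (![(0 : ℂ),(0 : ℂ),(0 : ℂ),(1 : ℂ),(-1 : ℂ)] : Fin 5 → ℂ)) h2
    rw [eval_sub2, hr] at E6
    have E7 := congrArg (eval (![(0 : ℂ),(0 : ℂ),(1 : ℂ),(0 : ℂ),(0 : ℂ)] : Fin 5 → ℂ)) h2
    rw [eval_sub2, hr] at E7
    have E8 := congrArg (eval (![(0 : ℂ),(0 : ℂ),(1 : ℂ),(0 : ℂ),(-1 : ℂ)] : Fin 5 → ℂ)) h2
    rw [eval_sub2, hr] at E8
    have E9 := congrArg (eval (![(0 : ℂ),(0 : ℂ),(1 : ℂ),(-1 : ℂ),(0 : ℂ)] : Fin 5 → ℂ)) h1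
    rw [eval_sub1, hr] at E9
    have E10 := congrArg (eval (![(0 : ℂ),(1 : ℂ),(0 : ℂ),(0 : ℂ),(0 : ℂ)] : Fin 5 → ℂ)) h1
    rw [eval_sub1, hr] at E10
    have E11 := congrArg (eval (![(0 : ℂ),(1 : ℂ),(-1 : ℂ),(0 : ℂ),(0 : ℂ)] : Fin 5 → ℂ)) h1
    rw [eval_sub1, hr] at E11
    have E12 := congrArg (eval (![(1 : ℂ),(0 : ℂ),(0 : ℂ),(0 : ℂ),(0 : ℂ)] : Fin 5 → ℂ)) h1
    rw [eval_sub1, hr] at E12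
    have E13 := congrArg (eval (![(1 : ℂ),(0 : ℂ),(-1 : ℂ),(0 : ℂ),(0 : ℂ)] : Fin 5 → ℂ)) h1
    rw [eval_sub1, hr] at E13
    have E14 := congrArg (eval (![(0 : ℂ),(0 : ℂ),(1 : ℂ),(-1 : ℂ),(0 : ℂ)] : Fin 5 → ℂ)) h2
    rw [eval_sub2, hr] at E14
    have E15 := congrArg (eval (![(0 : ℂ),(0 : ℂ),(0 : ℂ),(1 : ℂ),(1 : ℂ)] : Fin 5 → ℂ)) h2
    rw [eval_sub2, hr] at E15
    have E16 := congrArg (eval (![(0 : ℂ),(0 : ℂ),(1 : ℂ),(0 : ℂ),(1 : ℂ)] : Fin 5 → ℂ)) h2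
    rw [eval_sub2, hr] at E16
    have E17 := congrArg (eval (![(0 : ℂ),(0 : ℂ),(1 : ℂ),(1 : ℂ),(0 : ℂ)] : Fin 5 → ℂ)) h1
    rw [eval_sub1, hr] at E17
    have E18 := congrArg (eval (![(0 : ℂ),(1 : ℂ),(1 : ℂ),(0 : ℂ),(0 : ℂ)] : Fin 5 → ℂ)) h1
    rw [eval_sub1, hr] at E18
    have E19 := congrArg (eval (![(1 : ℂ),(0 : ℂ),(0 : ℂ),(0 : ℂ),(1 : ℂ)] : Fin 5 → ℂ)) h2
    rw [eval_sub2, hr] at E19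
    have E20 := congrArg (eval (![(1 : ℂ),(0 : ℂ),(1 : ℂ),(0 : ℂ),(0 : ℂ)] : Fin 5 → ℂ)) h1
    rw [eval_sub1, hr] at E20
    have E21 := congrArg (eval (![(1 : ℂ),(0 : ℂ),(1 : ℂ),(1 : ℂ),(0 : ℂ)] : Fin 5 → ℂ)) h2
    rw [eval_sub2, hr] at E21
    have E22 := congrArg (eval (![(1 : ℂ),(1 : ℂ),(0 : ℂ),(1 : ℂ),(0 : ℂ)] : Fin 5 → ℂ)) h1
    rw [eval_sub1, hr] at E22
    have E23 := congrArg (eval (![(0 : ℂ),(0 : ℂ),(0 : ℂ),(2 : ℂ),(-1 : ℂ)] : Fin 5 → ℂ)) h1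
    rw [eval_sub1, hr] at E23
    have E24 := congrArg (eval (![(0 : ℂ),(0 : ℂ),(1 : ℂ),(1 : ℂ),(0 : ℂ)] : Fin 5 → ℂ)) h2
    rw [eval_sub2, hr] at E24
    have E25 := congrArg (eval (![(0 : ℂ),(0 : ℂ),(-1 : ℂ),(-1 : ℂ),(2 : ℂ)] : Fin 5 → ℂ)) h2
    rw [eval_sub2, hr] at E25
    have E26 := congrArg (eval (![(0 : ℂ),(0 : ℂ),(-1 : ℂ),(2 : ℂ),(-1 : ℂ)] : Fin 5 → ℂ)) h1
    rw [eval_sub1, hr] at E26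
    have E27 := congrArg (eval (![(0 : ℂ),(1 : ℂ),(0 : ℂ),(1 : ℂ),(0 : ℂ)] : Fin 5 → ℂ)) h1
    rw [eval_sub1, hr] at E27
    have E28 := congrArg (eval (![(0 : ℂ),(-1 : ℂ),(0 : ℂ),(2 : ℂ),(0 : ℂ)] : Fin 5 → ℂ)) h2
    rw [eval_sub2, hr] at E28
    have E29 := congrArg (eval (![(0 : ℂ),(-1 : ℂ),(0 : ℂ),(2 : ℂ),(-1 : ℂ)] : Fin 5 → ℂ)) h2
    rw [eval_sub2, hr] at E29
    have E30 := congrArg (eval (![(0 : ℂ),(-1 : ℂ),(2 : ℂ),(0 : ℂ),(-1 : ℂ)] : Fin 5 → ℂ)) h2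
    rw [eval_sub2, hr] at E30
    have E31 := congrArg (eval (![(0 : ℂ),(-1 : ℂ),(2 : ℂ),(-1 : ℂ),(0 : ℂ)] : Fin 5 → ℂ)) h1
    rw [eval_sub1, hr] at E31
    have E32 := congrArg (eval (![(-1 : ℂ),(0 : ℂ),(2 : ℂ),(-1 : ℂ),(0 : ℂ)] : Fin 5 → ℂ)) h1
    rw [eval_sub1, hr] at E32
    simp only [map_add, eval_monomial_e5, Matrix.cons_val_zero,
      Matrix.cons_val_one, Matrix.head_cons, Matrix.cons_val_two, Matrix.tail_cons,
      Matrix.cons_val_three, Matrix.cons_val_four, Matrix.cons_val_fin_one] at E0 E1 E2 E3 E4 E5 E6 E7 E8 E9 E10 E11 E12 E13 E14 E15 E16 E17 E18 E19 E20 E21 E22 E23 E24 E25 E26 E27 E28 E29 E30 E31 E32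
    norm_num at E0 E1 E2 E3 E4 E5 E6 E7 E8 E9 E10 E11 E12 E13 E14 E15 E16 E17 E18 E19 E20 E21 E22 E23 E24 E25 E26 E27 E28 E29 E30 E31 E32
    refine ⟨coeff (e5 2 1 0 0 0) p, coeff (e5 2 0 1 0 0) p, ?_⟩
    have T0 : coeff (e5 3 0 0 0 0) p = (0 : ℂ) * coeff (e5 2 1 0 0 0) p + (0 : ℂ) * coeff (e5 2 0 1 0 0) p := by
      linear_combination (1/2 : ℂ) * E0 + (-1/6 : ℂ) * E3 + (1/2 : ℂ) * E6 + (1/2 : ℂ) * E10 + (-1/2 : ℂ) * E12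
    have T3 : coeff (e5 2 0 0 1 0) p = (0 : ℂ) * coeff (e5 2 1 0 0 0) p + (1 : ℂ) * coeff (e5 2 0 1 0 0) p := by
      linear_combination (-3/2 : ℂ) * E0 + (1/6 : ℂ) * E2 + (1/6 : ℂ) * E3 + (-3/2 : ℂ) * E6 + (-1 : ℂ) * E8 + (1 : ℂ) * E9 + (3/2 : ℂ) * E10 + (1/2 : ℂ) * E12 + (1 : ℂ) * E13 + (1/2 : ℂ) * E14 + (-1/2 : ℂ) * E25 + (1/2 : ℂ) * E26
    have T4 : coeff (e5 2 0 0 0 1) p = (1 : ℂ) * coeff (e5 2 1 0 0 0) p + (0 : ℂ) * coeff (e5 2 0 1 0 0) p := by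
      linear_combination (7/2 : ℂ) * E0 + (3 : ℂ) * E1 + (-1/2 : ℂ) * E2 + (1/6 : ℂ) * E3 + (-1/2 : ℂ) * E4 + (2 : ℂ) * E5 + (-1 : ℂ) * E6 + (-3/2 : ℂ) * E8 + (1/2 : ℂ) * E10 + (3/2 : ℂ) * E11 + (1/2 : ℂ) * E12 + (-1/2 : ℂ) * E15 + (-1/2 : ℂ) * E18 + (-1/2 : ℂ) * E19
    have T5 : coeff (e5 1 2 0 0 0) p = (1 : ℂ) * coeff (e5 2 1 0 0 0) p + (0 : ℂ) * coeff (e5 2 0 1 0 0) p := by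
      linear_combination (-3/2 : ℂ) * E0 + (-1 : ℂ) * E1 + (1/3 : ℂ) * E2 + (1/6 : ℂ) * E3 + (1 : ℂ) * E5 + (-1/2 : ℂ) * E6 + (1 : ℂ) * E8 + (-1/2 : ℂ) * E10 + (1/2 : ℂ) * E12
    have T6 : coeff (e5 1 1 1 0 0) p = (2 : ℂ) * coeff (e5 2 1 0 0 0) p + (0 : ℂ) * coeff (e5 2 0 1 0 0) p := by
      linear_combination (5/2 : ℂ) * E0 + (3/2 : ℂ) * E1 + (-1/3 : ℂ) * E2 + (1/3 : ℂ) * E3 + (3 : ℂ) * E5 + (-3 : ℂ) * E6 + (1/2 : ℂ) * E7 + (-1 : ℂ) * E8 + (-3/2 : ℂ) * E9 + (-3/2 : ℂ) * E10 + (7/2 : ℂ) * E11 + (1 : ℂ) * E12 + (-1/2 : ℂ) * E15 + (-1/2 : ℂ) * E18 + (-1/3 : ℂ) * E21 + (1/2 : ℂ) * E24 + (1/2 : ℂ) * E31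
    have T7 : coeff (e5 1 1 0 1 0) p = (0 : ℂ) * coeff (e5 2 1 0 0 0) p + (2 : ℂ) * coeff (e5 2 0 1 0 0) p := by
      linear_combination (-12 : ℂ) * E0 + (-15/2 : ℂ) * E1 + (4/3 : ℂ) * E2 + (1/3 : ℂ) * E3 + (-2 : ℂ) * E4 + (-3 : ℂ) * E5 + (1/2 : ℂ) * E6 + (3/2 : ℂ) * E7 + (1 : ℂ) * E8 + (3 : ℂ) * E9 + (3/2 : ℂ) * E10 + (-3 : ℂ) * E11 + (-1 : ℂ) * E12 + (2 : ℂ) * E13 + (1 : ℂ) * E15 + (1/2 : ℂ) * E17 + (1 : ℂ) * E18 + (1 : ℂ) * E19 + (1/3 : ℂ) * E22 + (-1/2 : ℂ) * E24 + (-1 : ℂ) * E25 + (1 : ℂ) * E26 + (-1/2 : ℂ) * E27 + (1/2 : ℂ) * E28 + (-1/2 : ℂ) * E29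
    have T8 : coeff (e5 1 1 0 0 1) p = (2 : ℂ) * coeff (e5 2 1 0 0 0) p + (0 : ℂ) * coeff (e5 2 0 1 0 0) p := by
      linear_combination (19/2 : ℂ) * E0 + (7/2 : ℂ) * E1 + (-7/6 : ℂ) * E2 + (1/6 : ℂ) * E3 + (-1 : ℂ) * E4 + (4 : ℂ) * E5 + (-9/2 : ℂ) * E6 + (3/2 : ℂ) * E7 + (-2 : ℂ) * E8 + (-3/2 : ℂ) * E9 + (-5/2 : ℂ) * E10 + (3 : ℂ) * E11 + (1 : ℂ) * E12 + (-3/2 : ℂ) * E13 + (-1 : ℂ) * E15 + (-1 : ℂ) * E18 + (-1 : ℂ) * E19 + (1/2 : ℂ) * E20 + (-1/3 : ℂ) * E22 + (1/2 : ℂ) * E25 + (-1/2 : ℂ) * E26 + (1/2 : ℂ) * E27 + (1/2 : ℂ) * E29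
    have T9 : coeff (e5 1 0 2 0 0) p = (0 : ℂ) * coeff (e5 2 1 0 0 0) p + (1 : ℂ) * coeff (e5 2 0 1 0 0) p := by
      linear_combination (3/2 : ℂ) * E0 + (-1 : ℂ) * E1 + (-1/6 : ℂ) * E3 + (-3/2 : ℂ) * E6 + (-3/2 : ℂ) * E10 + (-1/2 : ℂ) * E12 + (-1 : ℂ) * E13
    have T10 : coeff (e5 1 0 1 1 0) p = (0 : ℂ) * coeff (e5 2 1 0 0 0) p + (2 : ℂ) * coeff (e5 2 0 1 0 0) p := by
      linear_combination (5/2 : ℂ) * E0 + (7/2 : ℂ) * E1 + (-1/6 : ℂ) * E2 + (1/3 : ℂ) * E3 + (3/2 : ℂ) * E4 + (3/2 : ℂ) * E5 + (-4 : ℂ) * E6 + (-2 : ℂ) * E8 + (3 : ℂ) * E9 + (1/2 : ℂ) * E10 + (3/2 : ℂ) * E11 + (1 : ℂ) * E12 + (-1 : ℂ) * E13 + (-1/2 : ℂ) * E15 + (-1/2 : ℂ) * E17 + (-1/2 : ℂ) * E18 + (-1/2 : ℂ) * E19 + (-1/2 : ℂ) * E25 + (1/2 : ℂ) * E26 + (-1/2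 : ℂ) * E32
    have T11 : coeff (e5 1 0 1 0 1) p = (0 : ℂ) * coeff (e5 2 1 0 0 0) p + (2 : ℂ) * coeff (e5 2 0 1 0 0) p := by
      linear_combination (-2 : ℂ) * E0 + (1/3 : ℂ) * E3 + (-2 : ℂ) * E4 + (-3 : ℂ) * E5 + (-1 : ℂ) * E6 + (3/2 : ℂ) * E7 + (-3/2 : ℂ) * E8 + (3/2 : ℂ) * E9 + (3/2 : ℂ) * E10 + (-1 : ℂ) * E12 + (2 : ℂ) * E13 + (1/2 : ℂ) * E15 + (-1/2 : ℂ) * E16 + (1/3 : ℂ) * E22 + (1/2 : ℂ) * E23 + (-1/2 : ℂ) * E25 + (1/2 : ℂ) * E26 + (-1/2 : ℂ) * E27 + (1/2 : ℂ) * E28 + (-1/2 : ℂ) * E29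
    have T12 : coeff (e5 1 0 0 2 0) p = (0 : ℂ) * coeff (e5 2 1 0 0 0) p + (1 : ℂ) * coeff (e5 2 0 1 0 0) p := by
      linear_combination (-3 : ℂ) * E0 + (-1 : ℂ) * E1 + (1/2 : ℂ) * E2 + (1/3 : ℂ) * E3 + (-1 : ℂ) * E6 + (2 : ℂ) * E9 + (2 : ℂ) * E10 + (1 : ℂ) * E12 + (1 : ℂ) * E13 + (-1/2 : ℂ) * E14 + (-1/2 : ℂ) * E25 + (1/2 : ℂ) * E26
    have T13 : coeff (e5 1 0 0 1 1) p = (2 : ℂ) * coeff (e5 2 1 0 0 0) p + (0 : ℂ) * coeff (e5 2 0 1 0 0) p := by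
      linear_combination (9/2 : ℂ) * E0 + (4 : ℂ) * E1 + (-1/3 : ℂ) * E2 + (1 : ℂ) * E3 + (2 : ℂ) * E4 + (7 : ℂ) * E5 + (-7/2 : ℂ) * E6 + (-1 : ℂ) * E8 + (3 : ℂ) * E10 + (3 : ℂ) * E11 + (5 : ℂ) * E12 + (-3/2 : ℂ) * E15 + (-1 : ℂ) * E18 + (-1 : ℂ) * E19 + (-1/3 : ℂ) * E22 + (-1/2 : ℂ) * E28 + (1/2 : ℂ) * E29
    have T14 : coeff (e5 1 0 0 0 2) p = (1 : ℂ) * coeff (e5 2 1 0 0 0) p + (0 : ℂ) * coeff (e5 2 0 1 0 0) p := by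
      linear_combination (2 : ℂ) * E1 + (-1/6 : ℂ) * E2 + (2/3 : ℂ) * E3 + (1/2 : ℂ) * E4 + (2 : ℂ) * E5 + (-1/2 : ℂ) * E6 + (-1/2 : ℂ) * E8 + (1 : ℂ) * E10 + (3/2 : ℂ) * E11 + (2 : ℂ) * E12 + (-1/2 : ℂ) * E15 + (-1/2 : ℂ) * E18 + (-1/2 : ℂ) * E19
    have T15 : coeff (e5 0 3 0 0 0) p = (0 : ℂ) * coeff (e5 2 1 0 0 0) p + (0 : ℂ) * coeff (e5 2 0 1 0 0) p := by
      linear_combination (1/2 : ℂ) * E0 + (-1/6 : ℂ) * E3 + (-1/2 : ℂ) * E6 + (-1/2 : ℂ) * E10 + (-1/2 : ℂ) * E12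
    have T16 : coeff (e5 0 2 1 0 0) p = (1 : ℂ) * coeff (e5 2 1 0 0 0) p + (0 : ℂ) * coeff (e5 2 0 1 0 0) p := by
      linear_combination (2 : ℂ) * E0 + (1 : ℂ) * E1 + (2 : ℂ) * E5 + (-3/2 : ℂ) * E6 + (1/2 : ℂ) * E11 + (-1/2 : ℂ) * E15 + (-1/2 : ℂ) * E18
    have T17 : coeff (e5 0 2 0 1 0) p = (0 : ℂ) * coeff (e5 2 1 0 0 0) p + (1 : ℂ) * coeff (e5 2 0 1 0 0) p := by
      linear_combination (-5 : ℂ) * E0 + (-7/2 : ℂ) * E1 + (2/3 : ℂ) * E2 + (-1/2 : ℂ) * E4 + (-3 : ℂ) * E5 + (1/2 : ℂ) * E7 + (1/2 : ℂ) * E8 + (3/2 : ℂ) * E9 + (-1/2 : ℂ) * E10 + (-3/2 : ℂ) * E11 + (-2 : ℂ) * E12 + (1 : ℂ) * E13 + (1/2 : ℂ) * E15 + (1/2 : ℂ) * E18 + (1/2 : ℂ) * E19 + (1/3 : ℂ) * E22 + (-1/2 : ℂ) * E25 + (1/2 : ℂ) * E26 + (-1/2 : ℂ) * E27 + (1/2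 : ℂ) * E28 + (-1/2 : ℂ) * E29
    have T18 : coeff (e5 0 2 0 0 1) p = (0 : ℂ) * coeff (e5 2 1 0 0 0) p + (1 : ℂ) * coeff (e5 2 0 1 0 0) p := by
      linear_combination (-3/2 : ℂ) * E0 + (-1 : ℂ) * E1 + (1/6 : ℂ) * E3 + (-3/2 : ℂ) * E6 + (-3/2 : ℂ) * E10 + (-3/2 : ℂ) * E12 + (-1/2 : ℂ) * E13 + (1/2 : ℂ) * E20
    have T19 : coeff (e5 0 1 2 0 0) p = (1 : ℂ) * coeff (e5 2 1 0 0 0) p + (0 : ℂ) * coeff (e5 2 0 1 0 0) p := by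
      linear_combination (3/2 : ℂ) * E0 + (-1 : ℂ) * E1 + (1/3 : ℂ) * E2 + (1/6 : ℂ) * E3 + (2 : ℂ) * E5 + (-1 : ℂ) * E6 + (1 : ℂ) * E8 + (1/2 : ℂ) * E10 + (-1/2 : ℂ) * E11 + (1/2 : ℂ) * E12 + (-1/2 : ℂ) * E15 + (-1/2 : ℂ) * E18
    have T20 : coeff (e5 0 1 1 1 0) p = (2 : ℂ) * coeff (e5 2 1 0 0 0) p + (0 : ℂ) * coeff (e5 2 0 1 0 0) p := by
      linear_combination (-3/2 : ℂ) * E0 + (2/3 : ℂ) * E2 + (2/3 : ℂ) * E3 + (1 : ℂ) * E4 + (1 : ℂ) * E5 + (1/2 : ℂ) * E6 + (2 : ℂ) * E8 + (3/2 : ℂ) * E9 + (-3/2 : ℂ) * E11 + (-1/2 : ℂ) * E15 + (-1/2 : ℂ) * E17 + (-1/2 : ℂ) * E18 + (1/3 : ℂ) * E22 + (-1/2 : ℂ) * E27 + (1/2 : ℂ) * E28 + (-1/2 : ℂ) * E29 + (-1/2 : ℂ) * E31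
    have T21 : coeff (e5 0 1 1 0 1) p = (0 : ℂ) * coeff (e5 2 1 0 0 0) p + (2 : ℂ) * coeff (e5 2 0 1 0 0) p := by
      linear_combination (-13/2 : ℂ) * E0 + (-9/2 : ℂ) * E1 + (1 : ℂ) * E2 + (1/3 : ℂ) * E3 + (-1/2 : ℂ) * E4 + (-3 : ℂ) * E5 + (-1/2 : ℂ) * E6 + (3/2 : ℂ) * E7 + (3 : ℂ) * E8 + (3/2 : ℂ) * E9 + (2 : ℂ) * E10 + (-3 : ℂ) * E11 + (-5/2 : ℂ) * E12 + (1/2 : ℂ) * E13 + (1/2 : ℂ) * E15 + (-1/2 : ℂ) * E16 + (1/2 : ℂ) * E19 + (1/2 : ℂ) * E20 + (1/3 : ℂ) * E22 + (-1/2 : ℂ) * E25 + (1/2 : ℂ) * E26 + (-1/2 : ℂ) * E27 + (1/2 : ℂ) * E28 + (-1/2 : ℂ) * E29 + (-1/2 : ℂ) * E30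
    have T22 : coeff (e5 0 1 0 2 0) p = (0 : ℂ) * coeff (e5 2 1 0 0 0) p + (1 : ℂ) * coeff (e5 2 0 1 0 0) p := by
      linear_combination (-17/2 : ℂ) * E0 + (-7/2 : ℂ) * E1 + (1 : ℂ) * E2 + (1/2 : ℂ) * E3 + (-1/2 : ℂ) * E4 + (-3 : ℂ) * E5 + (3/2 : ℂ) * E6 + (-1/2 : ℂ) * E7 + (3/2 : ℂ) * E8 + (3/2 : ℂ) * E9 + (1 : ℂ) * E10 + (-3/2 : ℂ) * E11 + (-1/2 : ℂ) * E12 + (1 : ℂ) * E13 + (1/2 : ℂ) * E15 + (1/2 : ℂ) * E18 + (1/2 : ℂ) * E19 + (1/3 : ℂ) * E22 + (-1/2 : ℂ) * E25 + (1/2 : ℂ) * E26 + (-1/2 : ℂ) * E27 + (1/2 : ℂ) * E28 + (-1/2 : ℂ) * E29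
    have T23 : coeff (e5 0 1 0 1 1) p = (0 : ℂ) * coeff (e5 2 1 0 0 0) p + (2 : ℂ) * coeff (e5 2 0 1 0 0) p := by
      linear_combination (-17 : ℂ) * E0 + (-15/2 : ℂ) * E1 + (11/6 : ℂ) * E2 + (7/6 : ℂ) * E3 + (1 : ℂ) * E4 + (-3 : ℂ) * E5 + (5 : ℂ) * E6 + (-3/2 : ℂ) * E7 + (4 : ℂ) * E8 + (3/2 : ℂ) * E9 + (3/2 : ℂ) * E10 + (-3 : ℂ) * E11 + (1/2 : ℂ) * E13 + (1/2 : ℂ) * E15 + (1 : ℂ) * E18 + (1 : ℂ) * E19 + (1/2 : ℂ) * E20 + (1/3 : ℂ) * E22 + (-1/2 : ℂ) * E25 + (1/2 : ℂ) * E26 + (-1/2 : ℂ) * E27 + (1/2 : ℂ) * E28 + (-1 : ℂ) * E29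
    have T24 : coeff (e5 0 1 0 0 2) p = (0 : ℂ) * coeff (e5 2 1 0 0 0) p + (1 : ℂ) * coeff (e5 2 0 1 0 0) p := by
      linear_combination (-3 : ℂ) * E0 + (-1 : ℂ) * E1 + (1/3 : ℂ) * E3 + (-1/2 : ℂ) * E13 + (1/2 : ℂ) * E20
    have T25 : coeff (e5 0 0 3 0 0) p = (0 : ℂ) * coeff (e5 2 1 0 0 0) p + (0 : ℂ) * coeff (e5 2 0 1 0 0) p := by
      linear_combination (3/2 : ℂ) * E0 + (-1 : ℂ) * E1 + (-1/6 : ℂ) * E3 + (-1/2 : ℂ) * E6 + (-1/2 : ℂ) * E10 + (-1/2 : ℂ) * E12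
    have T26 : coeff (e5 0 0 2 1 0) p = (1 : ℂ) * coeff (e5 2 1 0 0 0) p + (0 : ℂ) * coeff (e5 2 0 1 0 0) p := by
      linear_combination (9/2 : ℂ) * E0 + (2 : ℂ) * E1 + (-1/6 : ℂ) * E2 + (1/6 : ℂ) * E3 + (3/2 : ℂ) * E4 + (2 : ℂ) * E5 + (-2 : ℂ) * E6 + (-1/2 : ℂ) * E8 + (1/2 : ℂ) * E9 + (-1/2 : ℂ) * E10 + (3/2 : ℂ) * E11 + (1/2 : ℂ) * E12 + (-1/2 : ℂ) * E15 + (-1/2 : ℂ) * E17 + (-1/2 : ℂ) * E18 + (-1/2 : ℂ) * E19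
    have T27 : coeff (e5 0 0 2 0 1) p = (0 : ℂ) * coeff (e5 2 1 0 0 0) p + (1 : ℂ) * coeff (e5 2 0 1 0 0) p := by
      linear_combination (-2 : ℂ) * E0 + (-7/2 : ℂ) * E1 + (1/3 : ℂ) * E2 + (-1/2 : ℂ) * E4 + (-3 : ℂ) * E5 + (3/2 : ℂ) * E7 + (3/2 : ℂ) * E9 + (-1/2 : ℂ) * E10 + (-3/2 : ℂ) * E11 + (-2 : ℂ) * E12 + (1 : ℂ) * E13 + (1/2 : ℂ) * E15 + (-1/2 : ℂ) * E16 + (1/2 : ℂ) * E18 + (1/2 : ℂ) * E19 + (1/3 : ℂ) * E22 + (-1/2 : ℂ) * E25 + (1/2 : ℂ) * E26 + (-1/2 : ℂ) * E27 + (1/2 : ℂ) * E28 + (-1/2 : ℂ) * E29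
    have T28 : coeff (e5 0 0 1 2 0) p = (1 : ℂ) * coeff (e5 2 1 0 0 0) p + (0 : ℂ) * coeff (e5 2 0 1 0 0) p := by
      linear_combination (1 : ℂ) * E0 + (2 : ℂ) * E1 + (1/6 : ℂ) * E2 + (2/3 : ℂ) * E3 + (3/2 : ℂ) * E4 + (2 : ℂ) * E5 + (-3/2 : ℂ) * E6 + (1/2 : ℂ) * E8 + (-1/2 : ℂ) * E9 + (3/2 : ℂ) * E11 + (2 : ℂ) * E12 + (-1/2 : ℂ) * E15 + (-1/2 : ℂ) * E17 + (-1/2 : ℂ) * E18 + (-1/2 : ℂ) * E19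
    have T29 : coeff (e5 0 0 1 1 1) p = (2 : ℂ) * coeff (e5 2 1 0 0 0) p + (0 : ℂ) * coeff (e5 2 0 1 0 0) p := by
      linear_combination (-2 : ℂ) * E0 + (-3/2 : ℂ) * E1 + (2/3 : ℂ) * E2 + (1 : ℂ) * E3 + (1 : ℂ) * E4 + (1 : ℂ) * E5 + (3/2 : ℂ) * E7 + (1/2 : ℂ) * E8 + (-1/2 : ℂ) * E10 + (1 : ℂ) * E12 + (-1/2 : ℂ) * E15 + (-1/2 : ℂ) * E16 + (-1/2 : ℂ) * E17 + (1/3 : ℂ) * E22 + (-1/2 : ℂ) * E25 + (-1/2 : ℂ) * E27 + (1/2 : ℂ) * E28 + (-1/2 : ℂ) * E29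
    have T30 : coeff (e5 0 0 1 0 2) p = (0 : ℂ) * coeff (e5 2 1 0 0 0) p + (1 : ℂ) * coeff (e5 2 0 1 0 0) p := by
      linear_combination (-13/2 : ℂ) * E0 + (-7/2 : ℂ) * E1 + (2/3 : ℂ) * E2 + (1/2 : ℂ) * E3 + (-1/2 : ℂ) * E4 + (-3 : ℂ) * E5 + (3/2 : ℂ) * E6 + (3/2 : ℂ) * E7 + (3/2 : ℂ) * E9 + (1 : ℂ) * E10 + (-3/2 : ℂ) * E11 + (-1/2 : ℂ) * E12 + (1 : ℂ) * E13 + (1/2 : ℂ) * E15 + (-1/2 : ℂ) * E16 + (1/2 : ℂ) * E18 + (1/2 : ℂ) * E19 + (1/3 : ℂ) * E22 + (-1/2 : ℂ) * E25 + (1/2 : ℂ) * E26 + (-1/2 : ℂ) * E27 + (1/2 : ℂ) * E28 + (-1/2 : ℂ) * E29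
    have T31 : coeff (e5 0 0 0 3 0) p = (0 : ℂ) * coeff (e5 2 1 0 0 0) p + (0 : ℂ) * coeff (e5 2 0 1 0 0) p := by
      linear_combination (-3/2 : ℂ) * E0 + (-1 : ℂ) * E1 + (1/3 : ℂ) * E2 + (1/6 : ℂ) * E3 + (1/2 : ℂ) * E6 + (1 : ℂ) * E8 + (1/2 : ℂ) * E10 + (1/2 : ℂ) * E12
    have T32 : coeff (e5 0 0 0 2 1) p = (1 : ℂ) * coeff (e5 2 1 0 0 0) p + (0 : ℂ) * coeff (e5 2 0 1 0 0) p := by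
      linear_combination (-7/2 : ℂ) * E0 + (-2 : ℂ) * E1 + (2/3 : ℂ) * E2 + (5/6 : ℂ) * E3 + (2 : ℂ) * E5 + (1 : ℂ) * E6 + (2 : ℂ) * E8 + (1/2 : ℂ) * E10 + (5/2 : ℂ) * E12 + (-1/2 : ℂ) * E15
    have T33 : coeff (e5 0 0 0 1 2) p = (1 : ℂ) * coeff (e5 2 1 0 0 0) p + (0 : ℂ) * coeff (e5 2 0 1 0 0) p := by
      linear_combination (-3 : ℂ) * E0 + (-1 : ℂ) * E1 + (1/3 : ℂ) * E2 + (2/3 : ℂ) * E3 + (2 : ℂ) * E5 + (1/2 : ℂ) * E6 + (1 : ℂ) * E8 + (1 : ℂ) * E10 + (2 : ℂ) * E12 + (-1/2 : ℂ) * E15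
    have T34 : coeff (e5 0 0 0 0 3) p = (0 : ℂ) * coeff (e5 2 1 0 0 0) p + (0 : ℂ) * coeff (e5 2 0 1 0 0) p := by
      linear_combination (-3/2 : ℂ) * E0 + (1/6 : ℂ) * E3 + (1/2 : ℂ) * E6 + (1/2 : ℂ) * E10 + (1/2 : ℂ) * E12
    conv_lhs => rw [rep0 p hp]
    rw [T0, T3, T4, T5, T6, T7, T8, T9, T10, T11, T12, T13, T14, T15, T16, T17, T18, T19, T20, T21, T22, T23, T24, T25, T26, T27, T28, T29, T30, T31, T32, T33, T34]
    exact (span_form _ _).symm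
  · rw [LinearIndependent.pair_iff]
    intro s t hst
    have h1 := congrArg (eval (![(1 : ℂ),1,0,0,0] : Fin 5 → ℂ)) hst
    have h2 := congrArg (eval (![(1 : ℂ),0,1,0,0] : Fin 5 → ℂ)) hst
    simp only [map_add, smul_eval, f1P, f2P, map_mul, map_pow, map_ofNat, eval_X, eval_C,
      map_zero, Matrix.cons_val_zero, Matrix.cons_val_one, Matrix.head_cons,
      Matrix.cons_val_two, Matrix.tail_cons, Matrix.cons_val_three, Matrix.cons_val_four,
      Matrix.cons_val_fin_one] at h1 h2
    norm_num at h1 h2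
    exact ⟨h1, h2⟩
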